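/- Let X^n = (X_1,…,X_n) be a random vector whose distribution is invariant under every permutation of coordinates (for every n), let θ_1, θ_2, … be i.i.d. Uniform[0,1] independent of the data, and define the smoothed sequential ranks R_n = (1/n)·#{i≤n : X_i > X_n} + θ_n·(1/n)·#{i≤n : X_i = X_n} (counting the n-th point itself in the tie count). Then R_1, R_2, … are i.i.d. Uniform[0,1]. -/

import Mathlib

open MeasureTheory ProbabilityTheory Finset

namespace SmoothedRanksAux

noncomputable def clamp (t : ℝ) : ℝ := min (max t 0) 1

lemma clamp_nonneg (t : ℝ) : 0 ≤ clamp t := le_min (le_max_right _ _) zero_le_one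

lemma clamp_eq (t : ℝ) : clamp t = min t 1 - min t 0 := by
  unfold clamp
  simp only [min_def, max_def]
  split_ifs <;> linarith

lemma clamp_term (u G E : ℝ) (hE : 0 < E) :
    clamp ((u - G) / E) = (min u (G + E) - min u G) / E := by
  rw [eq_div_iff hE.ne']
  set a := (u - G) / E with hadef
  have ha : a * E = u - G := div_mul_cancel₀ _ hE.ne'
  unfold clamp
  simp only [min_def, max_def]
  split_ifs <;> nlinarith [ha, hE]

open Classical in
lemma keyTel {ι : Type*} (x : ι → ℝ) (u : ℝ) (s : Finset ι) :
    ∑ j ∈ s, (min u ((s.filter fun i => x j ≤ x i).card : ℝ)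
        - min u ((s.filter fun i => x j < x i).card))
          / ((s.filter fun i => x i = x j).card)
      = min u (s.card : ℝ) - min u 0 := by
  induction s using Finset.strongInduction with
  | _ s ih =>
    rcases s.eq_empty_or_nonempty with rfl | hne
    · simp
    · have hxne : (s.image x).Nonempty := hne.image x
      set v : ℝ := (s.image x).min' hxne with hv
      have hvmem : v ∈ s.image x := (s.image x).min'_mem hxne
      have hvle : ∀ i ∈ s, v ≤ x i := fun i hi =>
        (s.image x).min'_le _ (mem_image_of_mem x hi)
      obtain ⟨j₀, hj₀s, hj₀⟩ := mem_image.mp hvmem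
      set s₀ : Finset ι := s.filter fun j => x j = v with hs₀
      set s₁ : Finset ι := s.filter fun j => ¬ x j = v with hs₁
      have hs₀ne : s₀.Nonempty := ⟨j₀, mem_filter.mpr ⟨hj₀s, hj₀⟩⟩
      have hsub : s₁ ⊆ s := filter_subset _ _
      have hssub : s₁ ⊂ s := by
        refine Finset.ssubset_iff_of_subset hsub |>.mpr ⟨j₀, hj₀s, ?_⟩
        simp [hs₁, hj₀]
      -- split sum
      rw [← Finset.sum_filter_add_sum_filter_not s (fun j => x j = v)]
      have h0 : ∀ j ∈ s₀, (min u ((s.filter fun i => x j ≤ x i).card : ℝ)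
          - min u ((s.filter fun i => x j < x i).card))
            / ((s.filter fun i => x i = x j).card)
          = (min u (s.card : ℝ) - min u (s₁.card : ℝ)) / (s₀.card : ℝ) := by
        intro j hj
        obtain ⟨hjs, hjv⟩ := mem_filter.mp hj
        have h1 : s.filter (fun i => x j ≤ x i) = s := by
          refine filter_true_of_mem fun i hi => ?_
          rw [hjv]; exact hvle i hi
        have h2 : s.filter (fun i => x j < x i) = s₁ := by
          apply filter_congr
          intro i hi
          rw [hjv]
          constructor
          · intro h; exact fun he => absurd (he ▸ h) (lt_irrefl v)
          · intro h; exact lt_of_le_of_ne (hvle i hi) (Ne.symm h)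
        have h3 : s.filter (fun i => x i = x j) = s₀ := by
          apply filter_congr
          intro i hi
          rw [hjv]
        rw [h1, h2, h3]
      rw [Finset.sum_congr rfl h0, Finset.sum_const, ← hs₁]
      have hcard0 : (s₀.card : ℝ) ≠ 0 := by
        exact_mod_cast Nat.cast_ne_zero.mpr (Finset.card_ne_zero_of_mem hs₀ne.choose_spec)
      have h1sum : ∑ j ∈ s₁, (min u ((s.filter fun i => x j ≤ x i).card : ℝ)
          - min u ((s.filter fun i => x j < x i).card))
            / ((s.filter fun i => x i = x j).card)
          = min u (s₁.card : ℝ) - min u 0 := by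
        rw [← ih s₁ hssub]
        refine Finset.sum_congr rfl fun j hj => ?_
        obtain ⟨hjs, hjv⟩ := mem_filter.mp hj
        have hvj : v < x j := lt_of_le_of_ne (hvle j hjs) (Ne.symm hjv)
        have e1 : s.filter (fun i => x j ≤ x i) = s₁.filter (fun i => x j ≤ x i) := by
          rw [hs₁, filter_filter]
          apply filter_congr
          intro i hi
          constructor
          · intro h; exact ⟨fun he => absurd (he ▸ h) (not_le.mpr hvj), h⟩
          · intro h; exact h.2
        have e2 : s.filter (fun i => x j < x i) = s₁.filter (fun i => x j < x i) := by
          rw [hs₁, filter_filter]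
          apply filter_congr
          intro i hi
          constructor
          · intro h; exact ⟨fun he => absurd (he ▸ h) (not_lt.mpr hvj.le), h⟩
          · intro h; exact h.2
        have e3 : s.filter (fun i => x i = x j) = s₁.filter (fun i => x i = x j) := by
          rw [hs₁, filter_filter]
          apply filter_congr
          intro i hi
          constructor
          · intro h; refine ⟨fun he => ?_, h⟩; rw [h] at he; exact absurd (he ▸ hvj) (lt_irrefl _)
          · intro h; exact h.2
        rw [e1, e2, e3]
      rw [h1sum]
      rw [nsmul_eq_mul, mul_div_cancel₀ _ hcard0]
      ring

end SmoothedRanksAux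

namespace SmoothedRanksAux

open Classical in
lemma sumClamp {ι : Type*} [Fintype ι] (x : ι → ℝ) (t : ℝ) :
    ∑ j, clamp ((t * (Fintype.card ι : ℝ) - ((univ.filter fun i => x j < x i).card : ℝ))
        / ((univ.filter fun i => x i = x j).card))
      = (Fintype.card ι : ℝ) * clamp t := by
  set u : ℝ := t * (Fintype.card ι : ℝ) with hu
  have hM : (0:ℝ) ≤ (Fintype.card ι : ℝ) := Nat.cast_nonneg _
  have hterm : ∀ j : ι,
      clamp ((u - ((univ.filter fun i => x j < x i).card : ℝ))
          / ((univ.filter fun i => x i = x j).card))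
        = (min u (((univ.filter fun i => x j ≤ x i).card : ℝ))
            - min u (((univ.filter fun i => x j < x i).card : ℝ)))
          / ((univ.filter fun i => x i = x j).card) := by
    intro j
    have hE : (0:ℝ) < ((univ.filter fun i => x i = x j).card : ℝ) := by
      have : j ∈ univ.filter fun i => x i = x j := by simp
      exact_mod_cast Nat.pos_of_ne_zero (Finset.card_ne_zero_of_mem this)
    have hGE : ((univ.filter fun i => x j ≤ x i).card : ℝ)
        = ((univ.filter fun i => x j < x i).card : ℝ)
          + ((univ.filter fun i => x i = x j).card : ℝ) := by
      have hdisj : Disjoint (univ.filter fun i => x j < x i)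
          (univ.filter fun i => x i = x j) := by
        rw [Finset.disjoint_filter]
        intro i _ hlt heq
        exact absurd (heq ▸ hlt) (lt_irrefl _)
      have hunion : (univ.filter fun i => x j ≤ x i)
          = (univ.filter fun i => x j < x i) ∪ (univ.filter fun i => x i = x j) := by
        ext i
        simp only [Finset.mem_filter, Finset.mem_union, Finset.mem_univ, true_and]
        constructor
        · intro h
          rcases lt_or_eq_of_le h with h' | h'
          · exact Or.inl h'
          · exact Or.inr h'.symm
        · rintro (h | h)
          · exact h.le
          · exact h.ge
      rw [hunion, Finset.card_union_of_disjoint hdisj]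
      push_cast; ring
    rw [clamp_term _ _ _ hE, hGE]
  rw [Finset.sum_congr rfl (fun j _ => hterm j)]
  have := keyTel x u (univ : Finset ι)
  rw [Finset.card_univ] at this
  rw [this]
  have h1 : min u (Fintype.card ι : ℝ) = min t 1 * (Fintype.card ι : ℝ) := by
    rw [hu, (min_mul_of_nonneg t 1 hM), one_mul]
  have h2 : min u 0 = min t 0 * (Fintype.card ι : ℝ) := by
    rw [hu, (min_mul_of_nonneg t 0 hM), zero_mul]
  rw [h1, h2, clamp_eq]
  ring

end SmoothedRanksAux

namespace SmoothedRanksAux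

open Classical in
noncomputable def gc (n : ℕ) (y : ℕ → ℝ) : ℕ :=
  ((range (n+1)).filter fun i => y n < y i).card

open Classical in
noncomputable def ec (n : ℕ) (y : ℕ → ℝ) : ℕ :=
  ((range (n+1)).filter fun i => y i = y n).card

def extv (N : ℕ) (v : Fin N → ℝ) : ℕ → ℝ := fun i => if h : i < N then v ⟨i, h⟩ else 0

lemma extv_lt {N : ℕ} (v : Fin N → ℝ) {i : ℕ} (h : i < N) : extv N v i = v ⟨i, h⟩ :=
  dif_pos h

lemma gc_congr {n : ℕ} {y z : ℕ → ℝ} (h : ∀ i ≤ n, y i = z i) : gc n y = gc n z := by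
  unfold gc
  congr 1
  apply filter_congr
  intro i hi
  rw [mem_range, Nat.lt_succ_iff] at hi
  rw [h i hi, h n le_rfl]

lemma ec_congr {n : ℕ} {y : ℕ → ℝ} {z : ℕ → ℝ} (h : ∀ i ≤ n, y i = z i) : ec n y = ec n z := by
  unfold ec
  congr 1
  apply filter_congr
  intro i hi
  rw [mem_range, Nat.lt_succ_iff] at hi
  rw [h i hi, h n le_rfl]

lemma ec_pos (n : ℕ) (y : ℕ → ℝ) : 0 < ec n y := by
  unfold ec
  apply Finset.card_pos.mpr
  exact ⟨n, by simp⟩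

open Classical in
lemma count_perm (N : ℕ) (v : Fin (N+1) → ℝ) (π : Equiv.Perm (Fin (N+1))) (p : ℝ → Prop) :
    ((range (N+1)).filter fun i => p (extv (N+1) (v ∘ π) i)).card
      = (univ.filter fun k : Fin (N+1) => p (v k)).card := by
  rw [Finset.card_filter, Finset.card_filter,
    ← Fin.sum_univ_eq_sum_range (fun i => if p (extv (N+1) (v ∘ π) i) then 1 else 0) (N+1)]
  have h1 : ∀ k : Fin (N+1),
      (if p (extv (N+1) (v ∘ π) (k : ℕ)) then 1 else 0)
        = (if p (v (π k)) then (1:ℕ) else 0) := by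
    intro k
    congr 1
    rw [extv_lt _ k.isLt]
    simp [Fin.eta]
  rw [Finset.sum_congr rfl (fun k _ => h1 k)]
  exact Equiv.sum_comp π (fun k => if p (v k) then 1 else 0)

end SmoothedRanksAux
namespace SmoothedRanksAux

open Classical in
lemma comb (t : ℕ → ℝ) :
    ∀ (N : ℕ) (S : Finset ℕ), (∀ n ∈ S, n < N) → ∀ v : Fin N → ℝ,
      ∑ π : Equiv.Perm (Fin N), ∏ n ∈ S,
          clamp ((t n * ((n:ℝ)+1) - (gc n (extv N (v ∘ π)) : ℝ))
            / (ec n (extv N (v ∘ π)) : ℝ))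
        = (N.factorial : ℝ) * ∏ n ∈ S, clamp (t n) := by
  intro N
  induction N with
  | zero =>
    intro S hS v
    have hSe : S = ∅ := Finset.eq_empty_of_forall_notMem fun n hn =>
      Nat.not_lt_zero n (hS n hn)
    subst hSe
    simp
  | succ N ih =>
    intro S hS v
    set eL : Fin (N+1) ≃ Option (Fin N) := finSuccEquivLast with heL
    set e : (Option (Fin N) × Equiv.Perm (Fin N)) ≃ Equiv.Perm (Fin (N+1)) :=
      Equiv.Perm.decomposeOption.symm.trans (Equiv.permCongr eL).symm with he
    set wfun : Option (Fin N) → Fin N → ℝ :=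
      fun o i => v (eL.symm ((Equiv.swap none o) (some i))) with hwfun
    have happ : ∀ (o : Option (Fin N)) (σ : Equiv.Perm (Fin N)) (k : Fin (N+1)),
        (e (o, σ)) k = eL.symm ((Equiv.swap none o) (Option.map σ (eL k))) := by
      intro o σ k
      simp [he, Equiv.trans_apply, Equiv.permCongr_symm, Equiv.permCongr_apply,
        Equiv.symm_symm, Equiv.Perm.decomposeOption_symm_apply, Equiv.Perm.mul_apply,
        Equiv.optionCongr_apply]
    have hlast : ∀ o σ, (e (o, σ)) (Fin.last N) = eL.symm o := by
      intro o σ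
      rw [happ]
      simp [heL]
    have hcast : ∀ o σ (i : Fin N),
        (e (o, σ)) (Fin.castSucc i) = eL.symm ((Equiv.swap none o) (some (σ i))) := by
      intro o σ i
      rw [happ]
      simp [heL]
    -- the inner factors for n < N
    have hprod : ∀ (o : Option (Fin N)) (σ : Equiv.Perm (Fin N)), ∀ n ∈ S.erase N,
        clamp ((t n * ((n:ℝ)+1) - (gc n (extv (N+1) (v ∘ (e (o, σ)))) : ℝ))
            / (ec n (extv (N+1) (v ∘ (e (o, σ)))) : ℝ))
          = clamp ((t n * ((n:ℝ)+1) - (gc n (extv N ((wfun o) ∘ σ)) : ℝ))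
            / (ec n (extv N ((wfun o) ∘ σ)) : ℝ)) := by
      intro o σ n hn
      have hnN : n < N := by
        have h1 := Finset.ne_of_mem_erase hn
        have h2 := hS n (Finset.mem_of_mem_erase hn)
        omega
      have hag : ∀ i ≤ n, extv (N+1) (v ∘ (e (o, σ))) i = extv N ((wfun o) ∘ σ) i := by
        intro i hi
        have hiN : i < N := lt_of_le_of_lt hi hnN
        rw [extv_lt _ (Nat.lt_succ_of_lt hiN), extv_lt _ hiN]
        show v ((e (o, σ)) (Fin.castSucc ⟨i, hiN⟩)) = wfun o (σ ⟨i, hiN⟩)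
        rw [hcast]
      rw [gc_congr hag, ec_congr hag]
    -- the factor at N
    have hgcN : ∀ (o : Option (Fin N)) (σ : Equiv.Perm (Fin N)),
        gc N (extv (N+1) (v ∘ (e (o, σ))))
          = (univ.filter fun k : Fin (N+1) => v (eL.symm o) < v k).card := by
      intro o σ
      have hN : extv (N+1) (v ∘ (e (o, σ))) N = v (eL.symm o) := by
        rw [extv_lt _ (Nat.lt_succ_self N)]
        show v ((e (o, σ)) (Fin.last N)) = _
        rw [hlast]
      unfold gc
      simp only [hN]
      exact count_perm N v (e (o, σ)) (fun z => v (eL.symm o) < z)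
    have hecN : ∀ (o : Option (Fin N)) (σ : Equiv.Perm (Fin N)),
        ec N (extv (N+1) (v ∘ (e (o, σ))))
          = (univ.filter fun k : Fin (N+1) => v k = v (eL.symm o)).card := by
      intro o σ
      have hN : extv (N+1) (v ∘ (e (o, σ))) N = v (eL.symm o) := by
        rw [extv_lt _ (Nat.lt_succ_self N)]
        show v ((e (o, σ)) (Fin.last N)) = _
        rw [hlast]
      unfold ec
      simp only [hN]
      exact count_perm N v (e (o, σ)) (fun z => z = v (eL.symm o))
    rw [← Equiv.sum_comp e, Fintype.sum_prod_type]
    have hS' : ∀ n ∈ S.erase N, n < N := by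
      intro n hn
      have h1 := Finset.ne_of_mem_erase hn
      have h2 := hS n (Finset.mem_of_mem_erase hn)
      omega
    by_cases hNS : N ∈ S
    · -- split off the factor at N
      have hsplit : ∀ (o : Option (Fin N)) (σ : Equiv.Perm (Fin N)),
          (∏ n ∈ S, clamp ((t n * ((n:ℝ)+1) - (gc n (extv (N+1) (v ∘ (e (o, σ)))) : ℝ))
              / (ec n (extv (N+1) (v ∘ (e (o, σ)))) : ℝ)))
            = clamp ((t N * ((N:ℝ)+1)
                  - ((univ.filter fun k : Fin (N+1) => v (eL.symm o) < v k).card : ℝ))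
                / ((univ.filter fun k : Fin (N+1) => v k = v (eL.symm o)).card : ℝ))
              * ∏ n ∈ S.erase N,
                  clamp ((t n * ((n:ℝ)+1) - (gc n (extv N ((wfun o) ∘ σ)) : ℝ))
                    / (ec n (extv N ((wfun o) ∘ σ)) : ℝ)) := by
        intro o σ
        rw [← Finset.mul_prod_erase S _ hNS, hgcN o σ, hecN o σ,
          Finset.prod_congr rfl (hprod o σ)]
      rw [Finset.sum_congr rfl fun o _ => Finset.sum_congr rfl fun σ _ => hsplit o σ]
      have hinner : ∀ o : Option (Fin N),
          ∑ σ : Equiv.Perm (Fin N),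
            (clamp ((t N * ((N:ℝ)+1)
                - ((univ.filter fun k : Fin (N+1) => v (eL.symm o) < v k).card : ℝ))
              / ((univ.filter fun k : Fin (N+1) => v k = v (eL.symm o)).card : ℝ))
              * ∏ n ∈ S.erase N,
                  clamp ((t n * ((n:ℝ)+1) - (gc n (extv N ((wfun o) ∘ σ)) : ℝ))
                    / (ec n (extv N ((wfun o) ∘ σ)) : ℝ)))
            = clamp ((t N * ((N:ℝ)+1)
                - ((univ.filter fun k : Fin (N+1) => v (eL.symm o) < v k).card : ℝ))
              / ((univ.filter fun k : Fin (N+1) => v k = v (eL.symm o)).card : ℝ))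
              * ((N.factorial : ℝ) * ∏ n ∈ S.erase N, clamp (t n)) := by
        intro o
        rw [← Finset.mul_sum, ih (S.erase N) hS' (wfun o)]
      rw [Finset.sum_congr rfl fun o _ => hinner o, ← Finset.sum_mul]
      have houter : ∑ o : Option (Fin N),
          clamp ((t N * ((N:ℝ)+1)
              - ((univ.filter fun k : Fin (N+1) => v (eL.symm o) < v k).card : ℝ))
            / ((univ.filter fun k : Fin (N+1) => v k = v (eL.symm o)).card : ℝ))
          = ((N:ℝ)+1) * clamp (t N) := by
        rw [Equiv.sum_comp eL.symm (fun j : Fin (N+1) =>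
          clamp ((t N * ((N:ℝ)+1) - ((univ.filter fun k : Fin (N+1) => v j < v k).card : ℝ))
            / ((univ.filter fun k : Fin (N+1) => v k = v j).card : ℝ)))]
        have hcard : ((N:ℝ)+1) = ((Fintype.card (Fin (N+1)) : ℕ) : ℝ) := by
          simp
        rw [hcard, sumClamp v (t N)]
      rw [houter, ← Finset.mul_prod_erase S _ hNS, Nat.factorial_succ]
      push_cast
      ring
    · have hSer : S.erase N = S := Finset.erase_eq_of_notMem hNS
      have hsplit : ∀ (o : Option (Fin N)) (σ : Equiv.Perm (Fin N)),
          (∏ n ∈ S, clamp ((t n * ((n:ℝ)+1) - (gc n (extv (N+1) (v ∘ (e (o, σ)))) : ℝ))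
              / (ec n (extv (N+1) (v ∘ (e (o, σ)))) : ℝ)))
            = ∏ n ∈ S,
                clamp ((t n * ((n:ℝ)+1) - (gc n (extv N ((wfun o) ∘ σ)) : ℝ))
                  / (ec n (extv N ((wfun o) ∘ σ)) : ℝ)) := by
        intro o σ
        refine Finset.prod_congr rfl fun n hn => hprod o σ n ?_
        rw [hSer]; exact hn
      rw [Finset.sum_congr rfl fun o _ => Finset.sum_congr rfl fun σ _ => hsplit o σ]
      have hinner : ∀ o : Option (Fin N),
          ∑ σ : Equiv.Perm (Fin N), ∏ n ∈ S,
              clamp ((t n * ((n:ℝ)+1) - (gc n (extv N ((wfun o) ∘ σ)) : ℝ))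
                / (ec n (extv N ((wfun o) ∘ σ)) : ℝ))
            = (N.factorial : ℝ) * ∏ n ∈ S, clamp (t n) := by
        intro o
        have := ih S (by rw [← hSer] at hS ⊢; exact hS') (wfun o)
        exact this
      rw [Finset.sum_congr rfl fun o _ => hinner o, Finset.sum_const]
      rw [nsmul_eq_mul]
      simp only [Finset.card_univ, Fintype.card_option, Fintype.card_fin]
      rw [Nat.factorial_succ]
      push_cast
      ring

end SmoothedRanksAux
namespace SmoothedRanksAux

lemma measurable_gcR (n : ℕ) : Measurable fun y : ℕ → ℝ => (gc n y : ℝ) := by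
  classical
  have h : (fun y : ℕ → ℝ => (gc n y : ℝ))
      = fun y => ∑ i ∈ range (n+1), if y n < y i then (1:ℝ) else 0 := by
    funext y
    rw [gc, Finset.card_filter, Nat.cast_sum]
    refine Finset.sum_congr rfl fun i _ => ?_
    split_ifs <;> simp
  rw [h]
  exact Finset.measurable_sum _ fun i _ => Measurable.ite
    (measurableSet_lt (measurable_pi_apply n) (measurable_pi_apply i))
    measurable_const measurable_const

lemma measurable_ecR (n : ℕ) : Measurable fun y : ℕ → ℝ => (ec n y : ℝ) := by
  classical
  have h : (fun y : ℕ → ℝ => (ec n y : ℝ))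
      = fun y => ∑ i ∈ range (n+1), if y i = y n then (1:ℝ) else 0 := by
    funext y
    rw [ec, Finset.card_filter, Nat.cast_sum]
    refine Finset.sum_congr rfl fun i _ => ?_
    split_ifs <;> simp
  rw [h]
  exact Finset.measurable_sum _ fun i _ => Measurable.ite
    (measurableSet_eq_fun (measurable_pi_apply i) (measurable_pi_apply n))
    measurable_const measurable_const

lemma unifCDF (c : ℝ) :
    (volume.restrict (Set.Icc (0:ℝ) 1)) (Set.Iic c) = ENNReal.ofReal (clamp c) := by
  rw [Measure.restrict_apply measurableSet_Iic]
  have h : Set.Iic c ∩ Set.Icc 0 1 = Set.Icc 0 (min c 1) := by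
    ext y
    simp only [Set.mem_inter_iff, Set.mem_Iic, Set.mem_Icc, le_min_iff]
    tauto
  rw [h, Real.volume_Icc, sub_zero]
  unfold clamp
  rcases le_total c 0 with hc | hc
  · rw [min_eq_left (hc.trans zero_le_one), max_eq_right hc, min_eq_left zero_le_one,
      ENNReal.ofReal_zero, ENNReal.ofReal_eq_zero.mpr hc]
  · rw [max_eq_left hc]

lemma mainProb {Ω : Type*} {m0 : MeasurableSpace Ω} {μ : Measure Ω} [IsProbabilityMeasure μ]
    (X : ℕ → Ω → ℝ) (hXmeas : ∀ n, Measurable (X n))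
    (θ : ℕ → Ω → ℝ) (hθmeas : ∀ n, Measurable (θ n))
    (hexch : ∀ (n : ℕ) (π : Equiv.Perm (Fin n)),
      Measure.map (fun ω => fun i : Fin n => X (π i) ω) μ
        = Measure.map (fun ω => fun i : Fin n => X i ω) μ)
    (hθindep : iIndepFun θ μ)
    (hθunif : ∀ n, Measure.map (θ n) μ = volume.restrict (Set.Icc (0 : ℝ) 1))
    (hθX : IndepFun (fun ω => fun n => X n ω) (fun ω => fun n => θ n ω) μ)
    (S : Finset ℕ) (t : ℕ → ℝ) :
    μ (⋂ n ∈ S, {ω | θ n ω ≤ (t n * ((n:ℝ)+1) - (gc n (fun i => X i ω) : ℝ))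
        / (ec n (fun i => X i ω) : ℝ)})
      = ∏ n ∈ S, ENNReal.ofReal (clamp (t n)) := by
  classical
  set c : ℕ → (ℕ → ℝ) → ℝ :=
    fun n y => (t n * ((n:ℝ)+1) - (gc n y : ℝ)) / (ec n y : ℝ) with hc
  have hXseq : Measurable (fun ω => fun n => X n ω) := measurable_pi_lambda _ hXmeas
  have hθseq : Measurable (fun ω => fun n => θ n ω) := measurable_pi_lambda _ hθmeas
  have hcmeas : ∀ n, Measurable (c n) := fun n =>
    (measurable_const.sub (measurable_gcR n)).div (measurable_ecR n)
  set A : Set ((ℕ → ℝ) × (ℕ → ℝ)) := ⋂ n ∈ S, {p | p.2 n ≤ c n p.1} with hA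
  have hAmeas : MeasurableSet A := by
    apply MeasurableSet.biInter (S.countable_toSet)
    intro n _
    refine measurableSet_le ?_ ?_
    · exact measurable_snd.eval
    · exact (hcmeas n).comp measurable_fst
  have hpre : (⋂ n ∈ S, {ω | θ n ω ≤ c n (fun i => X i ω)})
      = (fun ω => ((fun i => X i ω), (fun i => θ i ω))) ⁻¹' A := by
    rw [hA]
    ext ω
    simp only [Set.mem_iInter, Set.mem_setOf_eq, Set.mem_preimage]
  rw [show (⋂ n ∈ S, {ω | θ n ω ≤ (t n * ((n:ℝ)+1) - (gc n (fun i => X i ω) : ℝ))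
        / (ec n (fun i => X i ω) : ℝ)})
      = (⋂ n ∈ S, {ω | θ n ω ≤ c n (fun i => X i ω)}) from rfl]
  rw [hpre, ← Measure.map_apply (hXseq.prodMk hθseq) hAmeas]
  rw [(indepFun_iff_map_prod_eq_prod_map_map hXseq.aemeasurable hθseq.aemeasurable).mp hθX]
  rw [Measure.prod_apply hAmeas]
  have hsec : ∀ x : ℕ → ℝ, (Measure.map (fun ω => fun n => θ n ω) μ) (Prod.mk x ⁻¹' A)
      = ∏ n ∈ S, ENNReal.ofReal (clamp (c n x)) := by
    intro x
    have h1 : Prod.mk x ⁻¹' A = ⋂ n ∈ S, (fun y : ℕ → ℝ => y n) ⁻¹' (Set.Iic (c n x)) := by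
      rw [hA]
      ext y
      simp only [Set.mem_preimage, Set.mem_iInter, Set.mem_setOf_eq, Set.mem_Iic]
    have h2 : MeasurableSet (⋂ n ∈ S, (fun y : ℕ → ℝ => y n) ⁻¹' (Set.Iic (c n x))) :=
      MeasurableSet.biInter S.countable_toSet fun n _ =>
        (measurable_pi_apply n) measurableSet_Iic
    rw [h1, Measure.map_apply hθseq h2]
    have h3 : (fun ω => fun n => θ n ω) ⁻¹'
          (⋂ n ∈ S, (fun y : ℕ → ℝ => y n) ⁻¹' (Set.Iic (c n x)))
        = ⋂ n ∈ S, θ n ⁻¹' (Set.Iic (c n x)) := by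
      ext ω
      simp
    rw [h3, hθindep.measure_inter_preimage_eq_mul S (fun n _ => measurableSet_Iic)]
    refine Finset.prod_congr rfl fun n _ => ?_
    rw [← Measure.map_apply (hθmeas n) measurableSet_Iic, hθunif n, unifCDF]
  rw [lintegral_congr hsec]
  -- reduce to a finite-dimensional integral
  set N := S.sup id + 1 with hN
  have hSN : ∀ n ∈ S, n < N := fun n hn => Nat.lt_succ_of_le (Finset.le_sup (f := id) hn)
  set H : (Fin N → ℝ) → ENNReal :=
    fun w => ∏ n ∈ S, ENNReal.ofReal (clamp (c n (extv N w))) with hH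
  have hext : Measurable (extv N : (Fin N → ℝ) → (ℕ → ℝ)) := by
    apply measurable_pi_lambda
    intro i
    unfold extv
    by_cases h : i < N
    · simp only [dif_pos h]
      exact measurable_pi_apply _
    · simp only [dif_neg h]
      exact measurable_const
  have hclampm : Measurable clamp := by
    unfold clamp
    exact (measurable_id.max measurable_const).min measurable_const
  have hHmeas : Measurable H := by
    apply Finset.measurable_prod
    intro n _
    exact ENNReal.measurable_ofReal.comp (hclampm.comp ((hcmeas n).comp hext))
  have hpr : Measurable (fun x : ℕ → ℝ => fun i : Fin N => x i) :=
    measurable_pi_lambda _ fun i => measurable_pi_apply _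
  have hfactor : ∀ x : ℕ → ℝ,
      (∏ n ∈ S, ENNReal.ofReal (clamp (c n x))) = H (fun i : Fin N => x i) := by
    intro x
    refine Finset.prod_congr rfl fun n hn => ?_
    have hag : ∀ i ≤ n, x i = extv N (fun i : Fin N => x ↑i) i := by
      intro i hi
      rw [extv_lt _ (lt_of_le_of_lt hi (hSN n hn))]
    rw [hc]
    simp only
    rw [gc_congr hag, ec_congr hag]
  have hmap : Measure.map (fun x : ℕ → ℝ => fun i : Fin N => x i)
        (Measure.map (fun ω => fun n => X n ω) μ)
      = Measure.map (fun ω => fun i : Fin N => X (i : ℕ) ω) μ := by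
    rw [Measure.map_map hpr hXseq]
    rfl
  have hXN : Measurable (fun ω => fun i : Fin N => X (i : ℕ) ω) :=
    measurable_pi_lambda _ fun i => hXmeas _
  haveI : IsProbabilityMeasure (Measure.map (fun ω => fun i : Fin N => X (i : ℕ) ω) μ) :=
    Measure.isProbabilityMeasure_map hXN.aemeasurable
  have hstep1 : ∫⁻ x, ∏ n ∈ S, ENNReal.ofReal (clamp (c n x))
        ∂(Measure.map (fun ω => fun n => X n ω) μ)
      = ∫⁻ w, H w ∂(Measure.map (fun ω => fun i : Fin N => X (i : ℕ) ω) μ) := by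
    rw [lintegral_congr hfactor, ← hmap, lintegral_map hHmeas hpr]
  rw [hstep1]
  -- exchangeability: the law is invariant under coordinate permutations
  have hperm : ∀ π : Equiv.Perm (Fin N),
      Measure.map (fun w : Fin N → ℝ => w ∘ π)
          (Measure.map (fun ω => fun i : Fin N => X (i : ℕ) ω) μ)
        = Measure.map (fun ω => fun i : Fin N => X (i : ℕ) ω) μ := by
    intro π
    have hcomp : Measurable (fun w : Fin N → ℝ => w ∘ π) :=
      measurable_pi_lambda _ fun i => measurable_pi_apply _
    rw [Measure.map_map hcomp hXN]
    have : ((fun w : Fin N → ℝ => w ∘ π) ∘ (fun ω => fun i : Fin N => X (i : ℕ) ω))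
        = fun ω => fun i : Fin N => X ((π i : Fin N) : ℕ) ω := rfl
    rw [this, hexch N π]
  have hintπ : ∀ π : Equiv.Perm (Fin N),
      ∫⁻ w, H w ∂(Measure.map (fun ω => fun i : Fin N => X (i : ℕ) ω) μ)
        = ∫⁻ w, H (w ∘ π) ∂(Measure.map (fun ω => fun i : Fin N => X (i : ℕ) ω) μ) := by
    intro π
    have hcomp : Measurable (fun w : Fin N → ℝ => w ∘ π) :=
      measurable_pi_lambda _ fun i => measurable_pi_apply _
    conv_lhs => rw [← hperm π]
    rw [lintegral_map hHmeas hcomp]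
  have hptwise : ∀ w : Fin N → ℝ,
      ∑ π : Equiv.Perm (Fin N), H (w ∘ π)
        = (N.factorial : ENNReal) * ∏ n ∈ S, ENNReal.ofReal (clamp (t n)) := by
    intro w
    have h1 : ∀ π : Equiv.Perm (Fin N), H (w ∘ π)
        = ENNReal.ofReal (∏ n ∈ S, clamp (c n (extv N (w ∘ π)))) := by
      intro π
      rw [hH]
      simp only
      rw [ENNReal.ofReal_prod_of_nonneg fun n _ => clamp_nonneg _]
    rw [Finset.sum_congr rfl fun π _ => h1 π,
      ← ENNReal.ofReal_sum_of_nonneg fun π _ =>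
        Finset.prod_nonneg fun n _ => clamp_nonneg _]
    rw [show (∑ π : Equiv.Perm (Fin N), ∏ n ∈ S, clamp (c n (extv N (w ∘ π))))
        = (N.factorial : ℝ) * ∏ n ∈ S, clamp (t n) from comb t N S hSN w]
    rw [ENNReal.ofReal_mul (by positivity), ENNReal.ofReal_natCast,
      ENNReal.ofReal_prod_of_nonneg fun n _ => clamp_nonneg _]
  have hfacne : (N.factorial : ENNReal) ≠ 0 := by
    exact_mod_cast Nat.cast_ne_zero.mpr (Nat.factorial_ne_zero N)
  have hfacnetop : (N.factorial : ENNReal) ≠ ⊤ := ENNReal.natCast_ne_top _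
  rw [← ENNReal.mul_right_inj hfacne hfacnetop]
  calc (N.factorial : ENNReal)
        * ∫⁻ w, H w ∂(Measure.map (fun ω => fun i : Fin N => X (i : ℕ) ω) μ)
      = ∑ π : Equiv.Perm (Fin N),
          ∫⁻ w, H (w ∘ π) ∂(Measure.map (fun ω => fun i : Fin N => X (i : ℕ) ω) μ) := by
        rw [Finset.sum_congr rfl fun π _ => (hintπ π).symm, Finset.sum_const,
          Finset.card_univ, Fintype.card_perm, Fintype.card_fin, nsmul_eq_mul]
    _ = ∫⁻ w, ∑ π : Equiv.Perm (Fin N), H (w ∘ π)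
          ∂(Measure.map (fun ω => fun i : Fin N => X (i : ℕ) ω) μ) := by
        rw [lintegral_finset_sum]
        intro π _
        exact hHmeas.comp (measurable_pi_lambda _ fun i => measurable_pi_apply _)
    _ = (N.factorial : ENNReal) * ∏ n ∈ S, ENNReal.ofReal (clamp (t n)) := by
        rw [lintegral_congr hptwise, lintegral_const, measure_univ, mul_one]

end SmoothedRanksAux

open SmoothedRanksAux in
/-- Smoothed sequential ranks of an exchangeable sequence are i.i.d. `Uniform[0,1]`:
with `R n = (1/(n+1)) #{i ≤ n : X i > X n} + θ n ⬝ (1/(n+1)) #{i ≤ n : X i = X n}`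
(0-based indexing, the `n`-th point counted among the first `n+1`). -/
theorem smoothed_sequential_ranks_iid_uniform {Ω : Type*} {m0 : MeasurableSpace Ω}
    {μ : Measure Ω} [IsProbabilityMeasure μ]
    (X : ℕ → Ω → ℝ) (hXmeas : ∀ n, Measurable (X n))
    (θ : ℕ → Ω → ℝ) (hθmeas : ∀ n, Measurable (θ n))
    -- exchangeability of every finite initial segment
    (hexch : ∀ (n : ℕ) (π : Equiv.Perm (Fin n)),
      Measure.map (fun ω => fun i : Fin n => X (π i) ω) μ
        = Measure.map (fun ω => fun i : Fin n => X i ω) μ)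
    -- θ is an i.i.d. Uniform[0,1] sequence, independent of the data
    (hθindep : iIndepFun θ μ)
    (hθunif : ∀ n, Measure.map (θ n) μ = volume.restrict (Set.Icc (0 : ℝ) 1))
    (hθX : IndepFun (fun ω => fun n => X n ω) (fun ω => fun n => θ n ω) μ) :
    let R : ℕ → Ω → ℝ := fun n ω =>
      (((Finset.range (n + 1)).filter (fun i => X i ω > X n ω)).card : ℝ) / (n + 1)
        + θ n ω *
          ((((Finset.range (n + 1)).filter (fun i => X i ω = X n ω)).card : ℝ) / (n + 1))
    iIndepFun R μ ∧
      ∀ n, Measure.map (R n) μ = volume.restrict (Set.Icc (0 : ℝ) 1) := by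
  intro R
  classical
  have hXseq : Measurable (fun ω => fun n => X n ω) := measurable_pi_lambda _ hXmeas
  have hRdef : ∀ (n : ℕ) (ω : Ω), R n ω = (gc n (fun i => X i ω) : ℝ) / ((n:ℝ)+1)
      + θ n ω * ((ec n (fun i => X i ω) : ℝ) / ((n:ℝ)+1)) := by
    intro n ω
    show (((Finset.range (n + 1)).filter (fun i => X i ω > X n ω)).card : ℝ) / (n + 1)
        + θ n ω *
          ((((Finset.range (n + 1)).filter (fun i => X i ω = X n ω)).card : ℝ) / (n + 1))
      = _
    rw [gc, ec]
  have hRmeas : ∀ n, Measurable (R n) := by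
    intro n
    have h1 : Measurable fun ω => (gc n (fun i => X i ω) : ℝ) :=
      (measurable_gcR n).comp hXseq
    have h2 : Measurable fun ω => (ec n (fun i => X i ω) : ℝ) :=
      (measurable_ecR n).comp hXseq
    have : Measurable fun ω => (gc n (fun i => X i ω) : ℝ) / ((n:ℝ)+1)
        + θ n ω * ((ec n (fun i => X i ω) : ℝ) / ((n:ℝ)+1)) :=
      (h1.div_const _).add ((hθmeas n).mul (h2.div_const _))
    have heq : R n = fun ω => (gc n (fun i => X i ω) : ℝ) / ((n:ℝ)+1)
        + θ n ω * ((ec n (fun i => X i ω) : ℝ) / ((n:ℝ)+1)) := funext (hRdef n)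
    rw [heq]
    exact this
  have hev : ∀ (a : ℕ → ℝ) (n : ℕ),
      {ω | R n ω ≤ a n} = {ω | θ n ω ≤ (a n * ((n:ℝ)+1) - (gc n (fun i => X i ω) : ℝ))
          / (ec n (fun i => X i ω) : ℝ)} := by
    intro a n
    ext ω
    simp only [Set.mem_setOf_eq]
    rw [hRdef n ω]
    set g : ℝ := (gc n (fun i => X i ω) : ℝ) with hg
    set e : ℝ := (ec n (fun i => X i ω) : ℝ) with he
    have hnpos : (0:ℝ) < (n:ℝ)+1 := by positivity
    have hepos : (0:ℝ) < e := by
      rw [he]; exact_mod_cast ec_pos n _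
    have hL : g/((n:ℝ)+1) + θ n ω * (e/((n:ℝ)+1)) ≤ a n ↔ g + θ n ω * e ≤ a n * ((n:ℝ)+1) := by
      rw [show g/((n:ℝ)+1) + θ n ω * (e/((n:ℝ)+1)) = (g + θ n ω * e)/((n:ℝ)+1) by ring,
        div_le_iff₀ hnpos]
    have hR : θ n ω ≤ (a n * ((n:ℝ)+1) - g)/e ↔ g + θ n ω * e ≤ a n * ((n:ℝ)+1) := by
      rw [le_div_iff₀ hepos]
      constructor <;> intro h <;> linarith
    rw [hL, hR]
  have hcdf : ∀ (S : Finset ℕ) (a : ℕ → ℝ),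
      μ (⋂ n ∈ S, {ω | R n ω ≤ a n}) = ∏ n ∈ S, ENNReal.ofReal (clamp (a n)) := by
    intro S a
    rw [Set.iInter₂_congr (fun n (_ : n ∈ S) => hev a n)]
    exact mainProb X hXmeas θ hθmeas hexch hθindep hθunif hθX S a
  have hsingle : ∀ (n : ℕ) (a : ℝ), μ {ω | R n ω ≤ a} = ENNReal.ofReal (clamp a) := by
    intro n a
    have := hcdf {n} (fun _ => a)
    simpa using this
  constructor
  · rw [iIndepFun_iff_iIndep]
    refine iIndepSets.iIndep (fun n => (hRmeas n).comap_le)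
      (fun n => {s | ∃ a : ℝ, s = R n ⁻¹' Set.Iic a}) ?_ ?_ ?_
    · rintro n s ⟨a, rfl⟩ t ⟨b, rfl⟩ -
      exact ⟨min a b, by rw [← Set.preimage_inter, Set.Iic_inter_Iic]⟩
    · intro n
      conv_lhs => rw [show (Real.measurableSpace : MeasurableSpace ℝ) = borel ℝ from rfl,
        borel_eq_generateFrom_Iic ℝ]
      rw [MeasurableSpace.comap_generateFrom]
      congr 1
      ext s
      simp only [Set.mem_image, Set.mem_range, Set.mem_setOf_eq]
      constructor
      · rintro ⟨u, ⟨a, rfl⟩, rfl⟩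
        exact ⟨a, rfl⟩
      · rintro ⟨a, rfl⟩
        exact ⟨Set.Iic a, ⟨a, rfl⟩, rfl⟩
    · rw [iIndepSets_iff]
      intro s f hf
      have ha : ∀ n ∈ s, f n = R n ⁻¹' Set.Iic ((fun n =>
          if h : n ∈ s then (hf n h).choose else 0) n) := by
        intro n hn
        simp only [dif_pos hn]
        exact (hf n hn).choose_spec
      rw [Set.iInter₂_congr ha, show (⋂ n ∈ s, R n ⁻¹' Set.Iic ((fun n =>
          if h : n ∈ s then (hf n h).choose else 0) n))
        = ⋂ n ∈ s, {ω | R n ω ≤ (fun n => if h : n ∈ s then (hf n h).choose else 0) n}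
        from rfl, hcdf]
      refine Finset.prod_congr rfl fun n hn => ?_
      conv_rhs => rw [ha n hn]
      exact (hsingle n _).symm
  · intro n
    haveI : IsProbabilityMeasure (Measure.map (R n) μ) :=
      Measure.isProbabilityMeasure_map (hRmeas n).aemeasurable
    refine Measure.ext_of_Iic _ _ (fun a => ?_)
    rw [Measure.map_apply (hRmeas n) measurableSet_Iic, unifCDF,
      show R n ⁻¹' Set.Iic a = {ω | R n ω ≤ a} from rfl, hsingle]
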